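/- arXiv:1804.07904 — 4 statements merged into one kernel-verified Lean document; each statement's English description precedes it below -/
import Mathlib

section
/- Let φ be a Drinfeld A-module of rank r over F_p = A/p, and let E = End_{F_p}(φ) be the centralizer of φ(A) in F_p{τ}. Let n ∈ A be nonzero and coprime to p. An endomorphism w ∈ E acts as zero on the n-torsion φ[n] if and only if w ∈ n·E, i.e., w = v·φ_n for some v ∈ E. -/
open Polynomial

/-- Twisted polynomial multiplication on `L{τ}` (`τ·c = c^q·τ`), modelled on `Polynomial L`. -/
noncomputable def tmul {L : Type*} [CommSemiring L] (q : ℕ) (f g : Polynomial L) : Polynomial L :=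
  f.sum fun i a => g.sum fun j b => Polynomial.monomial (i + j) (a * b ^ q ^ i)

/-- Evaluation of a twisted polynomial `Σ aᵢ τ^i ∈ L{τ}` at a point `x` of an `L`-algebra `M`,
namely `Σ aᵢ x^{q^i}`. -/
noncomputable def teval {L M : Type*} [CommSemiring L] [CommSemiring M] [Algebra L M]
    (q : ℕ) (f : Polynomial L) (x : M) : M :=
  f.sum fun i a => algebraMap L M a * x ^ q ^ i

namespace Stmt5Aux

section Semi
variable {L : Type*} [CommSemiring L] {q : ℕ}

lemma inner_zero (q : ℕ) (g : Polynomial L) (i : ℕ) :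
    (g.sum fun j b => monomial (i + j) ((0:L) * b ^ q ^ i)) = 0 := by
  simp [Polynomial.sum]

@[simp] lemma tmul_zero_left (g : Polynomial L) : tmul q 0 g = 0 :=
  Polynomial.sum_zero_index _

lemma tmul_add_left (f f' g : Polynomial L) :
    tmul q (f + f') g = tmul q f g + tmul q f' g := by
  unfold tmul
  rw [Polynomial.sum_add_index]
  · exact fun i => inner_zero q g i
  · intro i a a'
    rw [← Polynomial.sum_add]
    congr 1; funext j b
    rw [add_mul, map_add (monomial (i + j))]

lemma tmul_monomial_left (i : ℕ) (a : L) (g : Polynomial L) :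
    tmul q (monomial i a) g = g.sum fun j b => monomial (i + j) (a * b ^ q ^ i) :=
  Polynomial.sum_monomial_index a _ (inner_zero q g i)

lemma tmul_monomial_monomial (hq : q ≠ 0) (i j : ℕ) (a b : L) :
    tmul q (monomial i a) (monomial j b) = monomial (i + j) (a * b ^ q ^ i) := by
  rw [tmul_monomial_left]
  exact Polynomial.sum_monomial_index b _ (by
    rw [zero_pow (pow_ne_zero i hq), mul_zero, monomial_zero_right])

lemma tmul_add_right (hq : q ≠ 0)
    (hfrob : ∀ (i : ℕ) (x y : L), (x + y) ^ q ^ i = x ^ q ^ i + y ^ q ^ i)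
    (f g g' : Polynomial L) :
    tmul q f (g + g') = tmul q f g + tmul q f g' := by
  unfold tmul
  rw [← Polynomial.sum_add]
  congr 1; funext i a
  rw [Polynomial.sum_add_index]
  · intro j
    rw [zero_pow (pow_ne_zero i hq), mul_zero, monomial_zero_right]
  · intro j b b'
    rw [hfrob, mul_add, map_add (monomial (i + j))]

lemma tmul_assoc (hq : q ≠ 0)
    (hfrob : ∀ (i : ℕ) (x y : L), (x + y) ^ q ^ i = x ^ q ^ i + y ^ q ^ i)
    (f g h : Polynomial L) :
    tmul q (tmul q f g) h = tmul q f (tmul q g h) := by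
  induction f using Polynomial.induction_on' with
  | add f f' ihf ihf' =>
    rw [tmul_add_left, tmul_add_left, tmul_add_left, ihf, ihf']
  | monomial i a =>
    induction g using Polynomial.induction_on' with
    | add g g' ihg ihg' =>
      rw [tmul_add_right hq hfrob, tmul_add_left, tmul_add_left,
        tmul_add_right hq hfrob, ihg, ihg']
    | monomial j b =>
      induction h using Polynomial.induction_on' with
      | add h h' ihh ihh' =>
        rw [tmul_add_right hq hfrob, tmul_add_right hq hfrob,
          tmul_add_right hq hfrob, ihh, ihh']
      | monomial k c =>
        rw [tmul_monomial_monomial hq, tmul_monomial_monomial hq,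
          tmul_monomial_monomial hq, tmul_monomial_monomial hq]
        rw [add_assoc]
        congr 1
        rw [mul_pow, ← pow_mul, pow_add, mul_comm (q ^ i) (q ^ j)]
        ring

lemma coeff_tmul_top (hq : q ≠ 0) (f g : Polynomial L) :
    (tmul q f g).coeff (f.natDegree + g.natDegree) =
      f.leadingCoeff * g.leadingCoeff ^ q ^ f.natDegree := by
  classical
  unfold tmul Polynomial.sum
  rw [Polynomial.finset_sum_coeff]
  rw [Finset.sum_eq_single f.natDegree]
  · rw [Polynomial.finset_sum_coeff]
    rw [Finset.sum_eq_single g.natDegree]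
    · rw [coeff_monomial, if_pos rfl]; rfl
    · intro j hj hjne
      rw [coeff_monomial, if_neg]
      have := Polynomial.le_natDegree_of_mem_supp j hj
      omega
    · intro hns
      rw [Polynomial.notMem_support_iff] at hns
      rw [coeff_monomial, hns, zero_pow (pow_ne_zero _ hq), mul_zero, ite_self]
  · intro i hi hine
    have hile := Polynomial.le_natDegree_of_mem_supp i hi
    rw [Polynomial.finset_sum_coeff]
    apply Finset.sum_eq_zero
    intro j hj
    have := Polynomial.le_natDegree_of_mem_supp j hj
    rw [coeff_monomial, if_neg]
    omega
  · intro hns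
    rw [Polynomial.notMem_support_iff] at hns
    have hf0 : f = 0 := Polynomial.leadingCoeff_eq_zero.1 hns
    subst hf0
    simp

lemma natDegree_tmul_le (f g : Polynomial L) :
    (tmul q f g).natDegree ≤ f.natDegree + g.natDegree := by
  unfold tmul Polynomial.sum
  apply Polynomial.natDegree_sum_le_of_forall_le
  intro i hi
  apply Polynomial.natDegree_sum_le_of_forall_le
  intro j hj
  refine (Polynomial.natDegree_monomial_le _).trans ?_
  have := Polynomial.le_natDegree_of_mem_supp i hi
  have := Polynomial.le_natDegree_of_mem_supp j hj
  omega

end Semi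

section FieldLemmas
variable {K : Type*} [Field K] {q : ℕ}

lemma tmul_ne_zero (hq : q ≠ 0) {f g : Polynomial K} (hf : f ≠ 0) (hg : g ≠ 0) :
    tmul q f g ≠ 0 := by
  intro h
  have := coeff_tmul_top hq f g
  rw [h, coeff_zero] at this
  exact (mul_ne_zero (Polynomial.leadingCoeff_ne_zero.2 hf)
    (pow_ne_zero _ (Polynomial.leadingCoeff_ne_zero.2 hg))) this.symm

lemma natDegree_tmul (hq : q ≠ 0) {f g : Polynomial K} (hf : f ≠ 0) (hg : g ≠ 0) :
    (tmul q f g).natDegree = f.natDegree + g.natDegree := by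
  refine le_antisymm (natDegree_tmul_le f g) ?_
  apply Polynomial.le_natDegree_of_ne_zero
  rw [coeff_tmul_top hq]
  exact mul_ne_zero (Polynomial.leadingCoeff_ne_zero.2 hf)
    (pow_ne_zero _ (Polynomial.leadingCoeff_ne_zero.2 hg))

lemma tmul_sub_left (f f' g : Polynomial K) :
    tmul q (f - f') g = tmul q f g - tmul q f' g := by
  have := tmul_add_left (q := q) (f - f') f' g
  rw [sub_add_cancel] at this
  rw [this]; ring

lemma tmul_cancel_right (hq : q ≠ 0) {f f' g : Polynomial K} (hg : g ≠ 0)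
    (h : tmul q f g = tmul q f' g) : f = f' := by
  by_contra hne
  have hsub : f - f' ≠ 0 := sub_ne_zero.2 hne
  have : tmul q (f - f') g = 0 := by rw [tmul_sub_left, h, sub_self]
  exact tmul_ne_zero hq hsub hg this

lemma tdiv (hq : q ≠ 0) (g : Polynomial K) (hg : g ≠ 0) (w : Polynomial K) :
    ∃ v rem : Polynomial K, w = tmul q v g + rem ∧ rem.degree < g.degree := by
  suffices H : ∀ N : ℕ, ∀ w : Polynomial K, w.natDegree < N →
      ∃ v rem : Polynomial K, w = tmul q v g + rem ∧ rem.degree < g.degree by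
    exact H (w.natDegree + 1) w (Nat.lt_succ_self _)
  intro N
  induction N with
  | zero => intro w h; omega
  | succ N ih =>
    intro w hwN
    by_cases hlt : w.degree < g.degree
    · exact ⟨0, w, by rw [tmul_zero_left, zero_add], hlt⟩
    push_neg at hlt
    have hw0 : w ≠ 0 := by
      rintro rfl
      rw [Polynomial.degree_zero, le_bot_iff, Polynomial.degree_eq_bot] at hlt
      exact hg hlt
    have hgd : g.natDegree ≤ w.natDegree := Polynomial.natDegree_le_natDegree hlt
    set k := w.natDegree - g.natDegree with hk
    set c := w.leadingCoeff * (g.leadingCoeff ^ q ^ k)⁻¹ with hc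
    have hgl : g.leadingCoeff ≠ 0 := Polynomial.leadingCoeff_ne_zero.2 hg
    have hc0 : c ≠ 0 := mul_ne_zero (Polynomial.leadingCoeff_ne_zero.2 hw0)
      (inv_ne_zero (pow_ne_zero _ hgl))
    set t : Polynomial K := monomial k c with ht
    have ht0 : t ≠ 0 := by
      rw [ht, Ne, Polynomial.monomial_eq_zero_iff]; exact hc0
    have htd : t.natDegree = k := Polynomial.natDegree_monomial_eq k hc0
    have htop : (tmul q t g).coeff w.natDegree = w.leadingCoeff := by
      have h1 := coeff_tmul_top hq t g
      rw [htd] at h1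
      have h2 : k + g.natDegree = w.natDegree := by omega
      rw [h2] at h1
      rw [h1, ht]
      rw [Polynomial.leadingCoeff_monomial]
      rw [hc, mul_assoc, inv_mul_cancel₀ (pow_ne_zero _ hgl), mul_one]
    have htmul0 : tmul q t g ≠ 0 := tmul_ne_zero hq ht0 hg
    have hnd : (tmul q t g).natDegree = w.natDegree := by
      rw [natDegree_tmul hq ht0 hg, htd]; omega
    have hdeg : (tmul q t g).degree = w.degree := by
      rw [Polynomial.degree_eq_natDegree htmul0, Polynomial.degree_eq_natDegree hw0, hnd]
    have hlc : (tmul q t g).leadingCoeff = w.leadingCoeff := by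
      show (tmul q t g).coeff (tmul q t g).natDegree = w.leadingCoeff
      rw [hnd]; exact htop
    set w' := w - tmul q t g with hw'
    by_cases hww : w' = 0
    · refine ⟨t, 0, ?_, ?_⟩
      · rw [add_zero]
        have : w - tmul q t g = 0 := hww
        linear_combination (norm := ring_nf) this
      · rw [Polynomial.degree_zero]
        exact bot_lt_iff_ne_bot.mpr fun hb => hg (Polynomial.degree_eq_bot.1 hb)
    · have hdlt : w'.degree < w.degree := by
        rw [hw']
        exact Polynomial.degree_sub_lt hdeg.symm hw0 hlc.symm
      have hndlt : w'.natDegree < w.natDegree := Polynomial.natDegree_lt_natDegree hww hdlt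
      obtain ⟨v, rem, heq, hr⟩ := ih w' (by omega)
      refine ⟨t + v, rem, ?_, hr⟩
      rw [tmul_add_left]
      have : w - tmul q t g = tmul q v g + rem := heq
      linear_combination (norm := ring_nf) this

end FieldLemmas

section Teval
variable {K M : Type*} [Field K] [CommSemiring M] [Algebra K M] {q : ℕ}

@[simp] lemma teval_zero_left (x : M) : teval q (0 : Polynomial K) x = 0 :=
  Polynomial.sum_zero_index _

lemma teval_add_left (f f' : Polynomial K) (x : M) :
    teval q (f + f') x = teval q f x + teval q f' x := by
  unfold teval
  rw [Polynomial.sum_add_index]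
  · intro i; rw [map_zero, zero_mul]
  · intro i a a'; rw [map_add, add_mul]

lemma teval_monomial_left (i : ℕ) (a : K) (x : M) :
    teval q (monomial i a) x = algebraMap K M a * x ^ q ^ i :=
  Polynomial.sum_monomial_index a _ (by rw [map_zero, zero_mul])

/-- `teval` at a fixed point, as an additive monoid hom in the polynomial. -/
noncomputable def tevalHom (q : ℕ) (x : M) : Polynomial K →+ M where
  toFun f := teval q f x
  map_zero' := teval_zero_left x
  map_add' f f' := teval_add_left f f' x

lemma teval_zero_right (hq : q ≠ 0) (f : Polynomial K) : teval q f (0 : M) = 0 := by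
  unfold teval Polynomial.sum
  apply Finset.sum_eq_zero
  intro i _
  simp [zero_pow (pow_ne_zero i hq)]

/-- `y ↦ y ^ q ^ i` as an additive monoid hom (in char `p`, `q` a `p`-power). -/
noncomputable def powHom (q i : ℕ) (hq : q ≠ 0)
    (hfrobM : ∀ (i : ℕ) (x y : M), (x + y) ^ q ^ i = x ^ q ^ i + y ^ q ^ i) : M →+ M where
  toFun y := y ^ q ^ i
  map_zero' := zero_pow (pow_ne_zero i hq)
  map_add' y z := hfrobM i y z

lemma teval_tmul (hq : q ≠ 0)
    (hfrobM : ∀ (i : ℕ) (x y : M), (x + y) ^ q ^ i = x ^ q ^ i + y ^ q ^ i)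
    (f g : Polynomial K) (x : M) :
    teval q (tmul q f g) x = teval q f (teval q g x) := by
  induction f using Polynomial.induction_on' with
  | add f f' ihf ihf' =>
    rw [tmul_add_left, teval_add_left, teval_add_left, ihf, ihf']
  | monomial i a =>
    rw [tmul_monomial_left, teval_monomial_left]
    have hL : teval q (g.sum fun j b => monomial (i + j) (a * b ^ q ^ i)) x
        = ∑ j ∈ g.support, algebraMap K M (a * (g.coeff j) ^ q ^ i) * x ^ q ^ (i + j) := by
      show tevalHom q x (g.sum fun j b => monomial (i + j) (a * b ^ q ^ i)) = _
      unfold Polynomial.sum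
      rw [map_sum]
      apply Finset.sum_congr rfl
      intro j _
      show teval q (monomial (i + j) (a * (g.coeff j) ^ q ^ i)) x = _
      rw [teval_monomial_left]
    rw [hL]
    have hR : (teval q g x) ^ q ^ i
        = ∑ j ∈ g.support, (algebraMap K M (g.coeff j) * x ^ q ^ j) ^ q ^ i := by
      show powHom q i hq hfrobM (teval q g x) = _
      unfold teval Polynomial.sum
      rw [map_sum]
      rfl
    rw [hR, Finset.mul_sum]
    apply Finset.sum_congr rfl
    intro j _
    rw [mul_pow, ← map_pow, map_mul, ← pow_mul, pow_add, mul_comm (q ^ i) (q ^ j)]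
    ring

end Teval

section AddPoly
variable {K M : Type*} [Field K] [Field M] [Algebra K M] {q : ℕ}

/-- The ordinary (additive) polynomial `Σ aᵢ X^{q^i}` attached to a twisted polynomial. -/
noncomputable def addPoly (q : ℕ) (f : Polynomial K) : Polynomial M :=
  f.sum fun i a => C (algebraMap K M a) * X ^ q ^ i

lemma teval_eq_eval (f : Polynomial K) (x : M) :
    teval q f x = (addPoly q f).eval x := by
  unfold teval addPoly Polynomial.sum
  rw [Polynomial.eval_finset_sum]
  apply Finset.sum_congr rfl
  intro i _
  rw [Polynomial.eval_mul, Polynomial.eval_C, Polynomial.eval_pow, Polynomial.eval_X]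

lemma coeff_addPoly_top (hq : 2 ≤ q) (f : Polynomial K) :
    (addPoly q f : Polynomial M).coeff (q ^ f.natDegree) = algebraMap K M f.leadingCoeff := by
  classical
  unfold addPoly Polynomial.sum
  rw [Polynomial.finset_sum_coeff]
  rw [Finset.sum_eq_single f.natDegree]
  · rw [Polynomial.coeff_C_mul, Polynomial.coeff_X_pow, if_pos rfl, mul_one]; rfl
  · intro i hi hine
    have hile := Polynomial.le_natDegree_of_mem_supp i hi
    have : q ^ i < q ^ f.natDegree := Nat.pow_lt_pow_right hq (by omega)
    rw [Polynomial.coeff_C_mul, Polynomial.coeff_X_pow, if_neg (by omega), mul_zero]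
  · intro hns
    rw [Polynomial.notMem_support_iff] at hns
    have hf0 : f = 0 := Polynomial.leadingCoeff_eq_zero.1 hns
    subst hf0
    simp

lemma natDegree_addPoly_le (hq : 2 ≤ q) (f : Polynomial K) :
    (addPoly q f : Polynomial M).natDegree ≤ q ^ f.natDegree := by
  unfold addPoly Polynomial.sum
  apply Polynomial.natDegree_sum_le_of_forall_le
  intro i hi
  refine (Polynomial.natDegree_C_mul_X_pow_le _ _).trans ?_
  exact Nat.pow_le_pow_right (by omega) (Polynomial.le_natDegree_of_mem_supp i hi)

lemma addPoly_ne_zero (hq : 2 ≤ q) {f : Polynomial K} (hf : f ≠ 0) :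
    (addPoly q f : Polynomial M) ≠ 0 := by
  intro h
  have h1 := coeff_addPoly_top (M := M) hq f
  rw [h, Polynomial.coeff_zero] at h1
  exact (algebraMap K M).injective.ne_iff.2
    (Polynomial.leadingCoeff_ne_zero.2 hf) (by simpa using h1.symm)

lemma natDegree_addPoly (hq : 2 ≤ q) {f : Polynomial K} (hf : f ≠ 0) :
    (addPoly q f : Polynomial M).natDegree = q ^ f.natDegree := by
  refine le_antisymm (natDegree_addPoly_le hq f) ?_
  apply Polynomial.le_natDegree_of_ne_zero
  rw [coeff_addPoly_top hq]
  simpa using (algebraMap K M).injective.ne_iff.2 (Polynomial.leadingCoeff_ne_zero.2 hf)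

lemma derivative_addPoly (hq : (q : M) = 0) (hq2 : 2 ≤ q) (f : Polynomial K) :
    Polynomial.derivative (addPoly q f : Polynomial M) = C (algebraMap K M (f.coeff 0)) := by
  classical
  unfold addPoly Polynomial.sum
  rw [Polynomial.derivative_sum]
  rw [Finset.sum_eq_single 0]
  · show Polynomial.derivative (C (algebraMap K M (f.coeff 0)) * X ^ q ^ 0) = _
    rw [pow_zero, pow_one, Polynomial.derivative_C_mul, Polynomial.derivative_X, mul_one]
  · intro i hi hine
    show Polynomial.derivative (C (algebraMap K M (f.coeff i)) * X ^ q ^ i) = 0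
    rw [Polynomial.derivative_C_mul, Polynomial.derivative_X_pow]
    have : ((q ^ i : ℕ) : M) = 0 := by
      rw [Nat.cast_pow, hq, zero_pow hine]
    rw [this, map_zero, zero_mul, mul_zero]
  · intro hns
    rw [Polynomial.notMem_support_iff] at hns
    show Polynomial.derivative (C (algebraMap K M (f.coeff 0)) * X ^ q ^ 0) = 0
    rw [hns, map_zero, Polynomial.C_0, zero_mul, Polynomial.derivative_zero]

lemma addPoly_separable (hqM : (q : M) = 0) (hq2 : 2 ≤ q) {f : Polynomial K}
    (h0 : f.coeff 0 ≠ 0) : (addPoly q f : Polynomial M).Separable := by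
  rw [Polynomial.separable_def, derivative_addPoly hqM hq2]
  set c := algebraMap K M (f.coeff 0) with hcdef
  have hc : c ≠ 0 := fun h => h0 ((algebraMap K M).injective (by rw [← hcdef, h, map_zero]))
  exact ⟨0, C c⁻¹, by
    rw [zero_mul, zero_add, ← Polynomial.C_mul, inv_mul_cancel₀ hc, Polynomial.C_1]⟩

end AddPoly
end Stmt5Aux

open Stmt5Aux

/-- Let `φ` be a Drinfeld `A`-module of rank `r` over `F_p = A/p` and
`E = End_{F_p}(φ)` the centralizer of `φ(A)` in `F_p{τ}`.  For `n ∈ A` nonzero and coprime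
to `p`, an endomorphism `w ∈ E` acts as zero on the `n`-torsion `φ[n]` (the zeros of
`φ_n(x)` in an algebraic closure `Ω` of `F_p`) if and only if `w = v·φ_n` for some `v ∈ E`. -/
theorem stmt5 (Fq : Type*) [Field Fq] [Fintype Fq]
    (p : Polynomial Fq) (hp : Irreducible p) [hmax : (Ideal.span {p}).IsMaximal]
    (Ω : Type*) [Field Ω] [Algebra (Polynomial Fq ⧸ Ideal.span {p}) Ω]
    [IsAlgClosed Ω] [Algebra.IsAlgebraic (Polynomial Fq ⧸ Ideal.span {p}) Ω]
    (r : ℕ) (hr : 1 ≤ r)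
    (φ : Polynomial Fq → Polynomial (Polynomial Fq ⧸ Ideal.span {p}))
    (hadd : ∀ a b, φ (a + b) = φ a + φ b)
    (hmul : ∀ a b, φ (a * b) = tmul (Fintype.card Fq) (φ a) (φ b))
    (hone : φ 1 = 1)
    (hrank : ∀ a : Polynomial Fq, a ≠ 0 → (φ a).natDegree = r * a.natDegree)
    (hconst : ∀ a : Polynomial Fq, (φ a).coeff 0 = Ideal.Quotient.mk (Ideal.span {p}) a)
    (n : Polynomial Fq) (hn : n ≠ 0) (hcop : IsCoprime n p)
    (w : Polynomial (Polynomial Fq ⧸ Ideal.span {p}))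
    (hw : ∀ a : Polynomial Fq,
      tmul (Fintype.card Fq) w (φ a) = tmul (Fintype.card Fq) (φ a) w) :
    (∀ x : Ω,
        teval (Fintype.card Fq) (φ n) x = 0 → teval (Fintype.card Fq) w x = 0) ↔
      ∃ v : Polynomial (Polynomial Fq ⧸ Ideal.span {p}),
        (∀ a : Polynomial Fq,
          tmul (Fintype.card Fq) v (φ a) = tmul (Fintype.card Fq) (φ a) v) ∧
        w = tmul (Fintype.card Fq) v (φ n) := by
    classical
  letI : Field (Polynomial Fq ⧸ Ideal.span {p}) := Ideal.Quotient.field _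
  set q := Fintype.card Fq with hqdef
  set p' := ringChar Fq with hp'def
  haveI hfactp' : Fact p'.Prime := ⟨CharP.char_is_prime Fq p'⟩
  obtain ⟨e, -, hcard⟩ := FiniteField.card Fq p'
  rw [← hqdef] at hcard
  haveI hchK : CharP (Polynomial Fq ⧸ Ideal.span {p}) p' := by
    haveI : Nontrivial (Polynomial Fq ⧸ Ideal.span {p}) := inferInstance
    exact charP_of_injective_ringHom
      (((Ideal.Quotient.mk (Ideal.span {p})).comp (C : Fq →+* Polynomial Fq)).injective) p'
  haveI hchΩ : CharP Ω p' :=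
    charP_of_injective_algebraMap
      ((algebraMap (Polynomial Fq ⧸ Ideal.span {p}) Ω).injective) p'
  have hq0 : q ≠ 0 := Fintype.card_ne_zero
  have hq2 : 2 ≤ q := Fintype.one_lt_card
  have hfrobK : ∀ (i : ℕ) (x y : Polynomial Fq ⧸ Ideal.span {p}),
      (x + y) ^ q ^ i = x ^ q ^ i + y ^ q ^ i := by
    intro i x y
    rw [hcard, ← pow_mul]
    exact add_pow_char_pow x y p' (↑e * i)
  have hfrobΩ : ∀ (i : ℕ) (x y : Ω), (x + y) ^ q ^ i = x ^ q ^ i + y ^ q ^ i := by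
    intro i x y
    rw [hcard, ← pow_mul]
    exact add_pow_char_pow x y p' (↑e * i)
  have hqΩ : ((q : ℕ) : Ω) = 0 := by
    rw [hcard]
    push_cast
    rw [CharP.cast_eq_zero Ω p']
    exact zero_pow (by exact_mod_cast e.pos.ne')
  have hmk : Ideal.Quotient.mk (Ideal.span {p}) n ≠ 0 := by
    obtain ⟨u, v, huv⟩ := hcop
    intro h0
    have h1 := congrArg (Ideal.Quotient.mk (Ideal.span {p})) huv
    have hp0 : Ideal.Quotient.mk (Ideal.span {p}) p = 0 := by
      rw [Ideal.Quotient.eq_zero_iff_mem]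
      exact Ideal.subset_span (Set.mem_singleton p)
    rw [map_add, map_mul, map_mul, map_one, h0, mul_zero, hp0, mul_zero, add_zero] at h1
    exact zero_ne_one h1
  have hφn : φ n ≠ 0 := fun h => hmk (by rw [← hconst n, h, Polynomial.coeff_zero])
  constructor
  · -- forward direction
    intro hvanish
    obtain ⟨v, rem, heq, hdeg⟩ := tdiv hq0 (φ n) hφn w
    have hrem : rem = 0 := by
      by_contra hr0
      have hPrem : (addPoly q rem : Polynomial Ω) ≠ 0 := addPoly_ne_zero hq2 hr0
      have hsep : (addPoly q (φ n) : Polynomial Ω).Separable :=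
        addPoly_separable hqΩ hq2 (by rw [hconst n]; exact hmk)
      have hcardS : Fintype.card ((addPoly q (φ n) : Polynomial Ω).rootSet Ω)
          = q ^ (φ n).natDegree := by
        rw [Polynomial.card_rootSet_eq_natDegree hsep (IsAlgClosed.splits _),
          natDegree_addPoly hq2 hφn]
      have hvan : ∀ x ∈ (addPoly q (φ n) : Polynomial Ω).rootSet Ω,
          (addPoly q rem : Polynomial Ω).eval x = 0 := by
        intro x hx
        rw [Polynomial.mem_rootSet] at hx
        have hx0 : teval q (φ n) x = 0 := by
          rw [teval_eq_eval]
          have h2 := hx.2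
          rw [aeval_def, Algebra.algebraMap_self] at h2
          exact h2
        have hwx := hvanish x hx0
        rw [heq, teval_add_left, teval_tmul hq0 hfrobΩ, hx0, teval_zero_right hq0,
          zero_add] at hwx
        rw [← teval_eq_eval]
        exact hwx
      have hzero : (addPoly q rem : Polynomial Ω) = 0 := by
        apply Polynomial.eq_zero_of_natDegree_lt_card_of_eval_eq_zero _
          (Subtype.val_injective (p := fun x => x ∈ (addPoly q (φ n) : Polynomial Ω).rootSet Ω))
        · intro i
          exact hvan i.1 i.2
        · rw [natDegree_addPoly hq2 hr0]
          rw [show Fintype.card ((addPoly q (φ n) : Polynomial Ω).rootSet Ω) =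
            q ^ (φ n).natDegree from hcardS]
          exact Nat.pow_lt_pow_right hq2 (Polynomial.natDegree_lt_natDegree hr0 hdeg)
      exact hPrem hzero
    rw [hrem, add_zero] at heq
    refine ⟨v, ?_, heq⟩
    intro a
    apply tmul_cancel_right hq0 hφn
    calc tmul q (tmul q v (φ a)) (φ n)
        = tmul q v (tmul q (φ a) (φ n)) := tmul_assoc hq0 hfrobK _ _ _
      _ = tmul q v (φ (a * n)) := by rw [hmul]
      _ = tmul q v (tmul q (φ n) (φ a)) := by rw [mul_comm, hmul]
      _ = tmul q (tmul q v (φ n)) (φ a) := (tmul_assoc hq0 hfrobK _ _ _).symm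
      _ = tmul q w (φ a) := by rw [← heq]
      _ = tmul q (φ a) w := hw a
      _ = tmul q (φ a) (tmul q v (φ n)) := by rw [← heq]
      _ = tmul q (tmul q (φ a) v) (φ n) := (tmul_assoc hq0 hfrobK _ _ _).symm
  · -- reverse direction
    rintro ⟨v, -, rfl⟩ x hx
    rw [teval_tmul hq0 hfrobΩ, hx, teval_zero_right hq0]
end

section
/- Let K be a field, V an r-dimensional K-vector space, t ∈ End_K(V) a diagonalizable endomorphism with r distinct eigenvalues in K, and g ∈ Aut_K(V). Then the differential of the map Ψ: Aut_K(V) × Z(t) → End_K(V), (g, w) ↦ g w g^{-1}, at the point (g, t), namely the linear map (M, N) ↦ gNg^{-1} + Mtg^{-1} − gtg^{-1}Mg^{-1} from End_K(V) × Z(t) to End_K(V), is surjective. -/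
/-- Let `K` be a field, `V` an `r`-dimensional `K`-vector space,
`t ∈ End_K(V)` diagonalizable with `r` distinct eigenvalues and `g ∈ Aut_K(V)`.
Then the differential of `Ψ : (g, w) ↦ g w g⁻¹` at `(g, t)`, i.e. the map
`(M, N) ↦ gNg⁻¹ + Mtg⁻¹ − gtg⁻¹Mg⁻¹` from `End_K(V) × Z(t)` to `End_K(V)`, is surjective. -/
theorem stmt9 (K V : Type*) [Field K] [AddCommGroup V] [Module K V]
    (r : ℕ) (b : Module.Basis (Fin r) K V)
    (t : Module.End K V) (μ : Fin r → K) (hμ : Function.Injective μ)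
    (ht : ∀ i, t (b i) = μ i • b i)
    (g : (Module.End K V)ˣ) :
    Function.Surjective
      (fun P : Module.End K V ×
          (Subalgebra.centralizer K ({t} : Set (Module.End K V))) =>
        (g : Module.End K V) * (P.2 : Module.End K V) * (↑g⁻¹ : Module.End K V) +
          P.1 * t * (↑g⁻¹ : Module.End K V) -
          (g : Module.End K V) * t * (↑g⁻¹ : Module.End K V) * P.1 *
            (↑g⁻¹ : Module.End K V)) := by
  classical
  intro X
  set e := LinearMap.toMatrixAlgEquiv b with he
  have hte : e t = Matrix.diagonal μ := by
    ext i j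
    rw [he, LinearMap.toMatrixAlgEquiv_apply, ht]
    simp [Matrix.diagonal_apply, Finsupp.single_apply, eq_comm]
    rcases eq_or_ne i j with rfl | h
    · simp
    · simp [h, Ne.symm h]
  set Y : Matrix (Fin r) (Fin r) K :=
    e ((↑g⁻¹ : Module.End K V) * X * ↑g) with hY
  set Nmat : Matrix (Fin r) (Fin r) K := Matrix.diagonal (fun i => Y i i) with hNmat
  set Mmat : Matrix (Fin r) (Fin r) K :=
    fun i j => if i = j then 0 else Y i j / (μ j - μ i) with hMmat
  have hN : e.symm Nmat ∈ Subalgebra.centralizer K ({t} : Set (Module.End K V)) := by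
    rw [Subalgebra.mem_centralizer_iff]
    intro x hx
    rw [Set.mem_singleton_iff] at hx
    subst hx
    apply e.injective
    rw [map_mul, map_mul, hte, AlgEquiv.apply_symm_apply, hNmat,
      Matrix.diagonal_mul_diagonal, Matrix.diagonal_mul_diagonal]
    simp [mul_comm]
  have key : e.symm Nmat + e.symm Mmat * t - t * e.symm Mmat =
      (↑g⁻¹ : Module.End K V) * X * ↑g := by
    apply e.injective
    rw [map_sub, map_add, map_mul, map_mul, hte, AlgEquiv.apply_symm_apply,
      AlgEquiv.apply_symm_apply, ← hY]
    ext i j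
    rcases eq_or_ne i j with rfl | h
    · rw [Matrix.sub_apply, Matrix.add_apply, Matrix.mul_diagonal, Matrix.diagonal_mul]
      simp [Matrix.mul_diagonal, Matrix.diagonal_mul, hNmat, hMmat]
    · have hμne : μ j - μ i ≠ 0 := sub_ne_zero.mpr (fun hc => h (hμ hc).symm)
      rw [Matrix.sub_apply, Matrix.add_apply, Matrix.mul_diagonal, Matrix.diagonal_mul]
      simp only [Matrix.sub_apply, Matrix.add_apply, Matrix.mul_diagonal,
        Matrix.diagonal_mul, hNmat, hMmat, Matrix.diagonal_apply_ne _ h, if_neg h]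
      field_simp
      ring
  refine ⟨⟨↑g * e.symm Mmat, ⟨e.symm Nmat, hN⟩⟩, ?_⟩
  have hX : X = ↑g * ((↑g⁻¹ : Module.End K V) * X * ↑g) * ↑g⁻¹ := by
    simp [mul_assoc, Units.mul_inv_cancel_left]
  conv_rhs => rw [hX, ← key]
  simp only [mul_add, add_mul, mul_sub, sub_mul, mul_assoc, Units.inv_mul_cancel_left]
end

section
/- Let A = F_q[T] with q even, F = F_q(T), and let K = F(√g) be an inseparable quadratic extension with g ∈ A not a square. Write g = s² + T·c² with s, c ∈ A (even/odd decomposition). Then A[√g] = A[c·√T], so the integral closure of A in K is A[√T], and the conductor index of A[√g] in A[√T] is generated by c. -/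
open Polynomial

lemma decomp_sq (Fq : Type*) [Field Fq] [Fintype Fq] [CharP Fq 2] (h : Polynomial Fq) :
    ∃ a b : Polynomial Fq, h = a ^ 2 + X * b ^ 2 := by
  have hsq : ∀ y : Fq, ∃ d : Fq, d ^ 2 = y := by
    intro y
    have hinj : Function.Injective (frobenius Fq 2) := frobenius_inj Fq 2
    obtain ⟨d, hd⟩ := (Finite.injective_iff_surjective.mp hinj) y
    exact ⟨d, hd⟩
  suffices H : ∀ n (h : Polynomial Fq), h.natDegree = n →
      ∃ a b : Polynomial Fq, h = a ^ 2 + X * b ^ 2 from H _ h rfl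
  intro n
  induction n using Nat.strong_induction_on with
  | _ n ih =>
    intro h hn
    rcases Nat.eq_zero_or_pos n with h0 | hpos
    · subst h0
      obtain ⟨d, hd⟩ := hsq (h.coeff 0)
      refine ⟨C d, 0, ?_⟩
      rw [eq_C_of_natDegree_eq_zero hn]
      simp [← C_pow, hd]
    · have hne : h.natDegree ≠ 0 := by omega
      obtain ⟨a, b, hab⟩ := ih (h.divX.natDegree) (by
        rw [natDegree_divX_eq_natDegree_tsub_one]; omega) h.divX rfl
      obtain ⟨d, hd⟩ := hsq (h.coeff 0)
      refine ⟨C d + X * b, a, ?_⟩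
      have h2 := h.divX_mul_X_add
      rw [CharTwo.add_sq, ← h2, hab, mul_pow, ← C_pow, hd]
      ring

lemma adjoin_sq_eq_span {R S : Type*} [CommRing R] [CommRing S] [Algebra R S]
    (y : S) (a : R) (h : y ^ 2 = algebraMap R S a) :
    (Subalgebra.toSubmodule (Algebra.adjoin R ({y} : Set S)) : Submodule R S) =
      Submodule.span R {1, y} := by
  apply le_antisymm
  · intro x hx
    simp only [Subalgebra.mem_toSubmodule] at hx
    induction hx using Algebra.adjoin_induction with
    | mem z hz =>
      rcases hz with rfl
      exact Submodule.subset_span (by simp)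
    | algebraMap r =>
      rw [Algebra.algebraMap_eq_smul_one]
      exact Submodule.smul_mem _ _ (Submodule.subset_span (by simp))
    | add x y hx hy ihx ihy => exact Submodule.add_mem _ ihx ihy
    | mul x' y' hx' hy' ihx ihy =>
      obtain ⟨u, v, huv⟩ := Submodule.mem_span_pair.mp ihx
      obtain ⟨u', v', huv'⟩ := Submodule.mem_span_pair.mp ihy
      apply Submodule.mem_span_pair.mpr
      refine ⟨u * u' + a * (v * v'), u * v' + v * u', ?_⟩
      rw [← huv, ← huv']
      simp only [Algebra.smul_def, map_add, map_mul, mul_one, h.symm]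
      ring
  · rw [Submodule.span_le]
    rintro z hz
    simp only [Set.mem_insert_iff, Set.mem_singleton_iff] at hz
    rcases hz with rfl | rfl
    · exact Subalgebra.one_mem _
    · exact Algebra.subset_adjoin rfl

/-- Let `A = F_q[T]` with `q` even, `F = F_q(T)`, and `K = F(√g)` an
inseparable quadratic extension with `g ∈ A` not a square.  Write `g = s² + T·c²`.
Then `A[√g] = A[c·√T]`, the integral closure of `A` in `K` is `A[√T]`, and the index of
`A[√g]` in `A[√T]` is generated by `c` (i.e. `A[√T]/A[√g] ≅ A/(c)` as `A`-modules). -/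
theorem stmt13 (Fq : Type*) [Field Fq] [Fintype Fq] [CharP Fq 2]
    (g s c : Polynomial Fq) (hns : ¬ IsSquare g)
    (hdecomp : g = s ^ 2 + Polynomial.X * c ^ 2)
    (K : Type*) [Field K] [Algebra (RatFunc Fq) K] [Algebra (Polynomial Fq) K]
    [IsScalarTower (Polynomial Fq) (RatFunc Fq) K]
    (hdim : Module.finrank (RatFunc Fq) K = 2)
    (ρ θ : K)
    (hρ : ρ ^ 2 = algebraMap (Polynomial Fq) K g)
    (hθ : θ ^ 2 = algebraMap (Polynomial Fq) K Polynomial.X)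
    (hrel : ρ = algebraMap (Polynomial Fq) K s + algebraMap (Polynomial Fq) K c * θ)
    (hgen : Algebra.adjoin (RatFunc Fq) ({ρ} : Set K) = ⊤) :
    Algebra.adjoin (Polynomial Fq) ({ρ} : Set K) =
      Algebra.adjoin (Polynomial Fq) ({algebraMap (Polynomial Fq) K c * θ} : Set K) ∧
    integralClosure (Polynomial Fq) K = Algebra.adjoin (Polynomial Fq) ({θ} : Set K) ∧
    Nonempty
      (((Subalgebra.toSubmodule (Algebra.adjoin (Polynomial Fq) ({θ} : Set K)) :
            Submodule (Polynomial Fq) K) ⧸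
          (Subalgebra.toSubmodule
            (Algebra.adjoin (Polynomial Fq) ({ρ} : Set K))).comap
            (Subalgebra.toSubmodule (Algebra.adjoin (Polynomial Fq) ({θ} : Set K))).subtype)
        ≃ₗ[Polynomial Fq] (Polynomial Fq ⧸ Ideal.span {c})) := by
  -- characteristic 2 on K
  haveI hK2 : CharP K 2 :=
    charP_of_injective_ringHom
      (f := ((algebraMap (Polynomial Fq) K).comp (C : Fq →+* Polynomial Fq)))
      (RingHom.injective _) 2
  -- injectivity of the various algebra maps
  have hFK : Function.Injective (algebraMap (RatFunc Fq) K) := RingHom.injective _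
  have hAF : Function.Injective (algebraMap (Polynomial Fq) (RatFunc Fq)) :=
    IsFractionRing.injective _ _
  have hAK : Function.Injective (algebraMap (Polynomial Fq) K) := by
    rw [IsScalarTower.algebraMap_eq (Polynomial Fq) (RatFunc Fq) K]
    exact hFK.comp hAF
  -- c ≠ 0
  have hc : c ≠ 0 := by
    rintro rfl
    exact hns ⟨s, by rw [hdecomp]; ring⟩
  -- θ is not in the image of F
  have hθnot : ∀ t : RatFunc Fq, algebraMap (RatFunc Fq) K t ≠ θ := by
    intro t ht
    have hρmem : ρ ∈ (⊥ : Subalgebra (RatFunc Fq) K) := by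
      rw [Algebra.mem_bot]
      refine ⟨algebraMap _ _ s + algebraMap _ _ c * t, ?_⟩
      rw [hrel, ← ht]
      simp [IsScalarTower.algebraMap_apply (Polynomial Fq) (RatFunc Fq) K]
    have hbt : (⊥ : Subalgebra (RatFunc Fq) K) = ⊤ := by
      rw [← hgen]
      apply le_antisymm bot_le
      apply Algebra.adjoin_le
      simpa [Algebra.mem_bot] using hρmem
    have := Subalgebra.bot_eq_top_iff_finrank_eq_one.mp hbt
    rw [hdim] at this
    omega
  have hθne : θ ≠ 0 := by
    intro h
    apply hθnot 0
    rw [map_zero, h]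
  -- linear independence of 1, θ over F
  have hli : LinearIndependent (RatFunc Fq) ![(1 : K), θ] := by
    rw [linearIndependent_fin2]
    constructor
    · simpa using hθne
    · intro a ha
      simp only [Matrix.cons_val_one, Matrix.head_cons, Matrix.cons_val_zero] at ha
      have ha0 : a ≠ 0 := by rintro rfl; simp at ha
      apply hθnot a⁻¹
      rw [Algebra.algebraMap_eq_smul_one]
      rw [← ha, smul_smul, inv_mul_cancel₀ ha0, one_smul]
  -- the basis (1, θ)
  have hcard : Fintype.card (Fin 2) = Module.finrank (RatFunc Fq) K := by simp [hdim]
  let b : Module.Basis (Fin 2) (RatFunc Fq) K := basisOfLinearIndependentOfCardEqFinrank hli hcard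
  have hb : ⇑b = ![(1 : K), θ] := coe_basisOfLinearIndependentOfCardEqFinrank hli hcard
  -- PART 1
  have part1 : Algebra.adjoin (Polynomial Fq) ({ρ} : Set K) =
      Algebra.adjoin (Polynomial Fq) ({algebraMap (Polynomial Fq) K c * θ} : Set K) := by
    apply le_antisymm
    · apply Algebra.adjoin_le
      intro z hz
      rcases hz with rfl
      rw [hrel]
      exact add_mem (Subalgebra.algebraMap_mem _ _) (Algebra.subset_adjoin rfl)
    · apply Algebra.adjoin_le
      intro z hz
      rcases hz with rfl
      have hcθ : algebraMap (Polynomial Fq) K c * θ = ρ - algebraMap (Polynomial Fq) K s := by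
        rw [hrel]; ring
      rw [hcθ]
      exact sub_mem (Algebra.subset_adjoin rfl) (Subalgebra.algebraMap_mem _ _)
  -- every element of K is an F-combination of 1 and θ
  have hrepr : ∀ x : K, ∃ p q : RatFunc Fq,
      x = algebraMap (RatFunc Fq) K p + algebraMap (RatFunc Fq) K q * θ := by
    intro x
    refine ⟨b.repr x 0, b.repr x 1, ?_⟩
    have hs := b.sum_repr x
    rw [Fin.sum_univ_two] at hs
    conv_lhs => rw [← hs]
    simp [hb, Algebra.smul_def]
  -- PART 2
  have part2 : integralClosure (Polynomial Fq) K =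
      Algebra.adjoin (Polynomial Fq) ({θ} : Set K) := by
    apply le_antisymm
    · intro x hx
      obtain ⟨p, q, hpq⟩ := hrepr x
      have hxsq : x ^ 2 = algebraMap (RatFunc Fq) K
          (p ^ 2 + q ^ 2 * algebraMap (Polynomial Fq) (RatFunc Fq) Polynomial.X) := by
        rw [hpq, CharTwo.add_sq, mul_pow, hθ,
          IsScalarTower.algebraMap_apply (Polynomial Fq) (RatFunc Fq) K]
        simp [map_add, map_mul, map_pow]
      have hint : IsIntegral (Polynomial Fq) (x ^ 2) := hx.pow 2
      rw [hxsq] at hint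
      have hint' : IsIntegral (Polynomial Fq)
          (p ^ 2 + q ^ 2 * algebraMap (Polynomial Fq) (RatFunc Fq) Polynomial.X) :=
        (isIntegral_algebraMap_iff hFK).mp hint
      obtain ⟨h', hh'⟩ := IsIntegrallyClosed.isIntegral_iff.mp hint'
      obtain ⟨h₀, h₁, hdec⟩ := decomp_sq Fq h'
      set y : K := algebraMap (Polynomial Fq) K h₀ + algebraMap (Polynomial Fq) K h₁ * θ
        with hy
      have hysq : y ^ 2 = x ^ 2 := by
        rw [hy, CharTwo.add_sq, mul_pow, hθ, hxsq, ← hh', hdec]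
        simp only [map_add, map_mul, map_pow,
          ← IsScalarTower.algebraMap_apply (Polynomial Fq) (RatFunc Fq) K]
        ring
      have hxy : x = y := by
        have h0 : (x + y) ^ 2 = 0 := by
          rw [CharTwo.add_sq, hysq, CharTwo.add_self_eq_zero]
        have h0' := pow_eq_zero_iff (n := 2) (by norm_num) |>.mp h0
        have hxny : x = -y := by linear_combination h0'
        rwa [CharTwo.neg_eq] at hxny
      show x ∈ (Subalgebra.toSubmodule (Algebra.adjoin (Polynomial Fq) ({θ} : Set K)) :
        Submodule (Polynomial Fq) K)
      rw [adjoin_sq_eq_span θ Polynomial.X hθ]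
      apply Submodule.mem_span_pair.mpr
      exact ⟨h₀, h₁, by rw [hxy, hy]; simp [Algebra.smul_def]⟩
    · apply Algebra.adjoin_le
      intro z hz
      rcases hz with rfl
      exact ⟨Polynomial.X ^ 2 - Polynomial.C Polynomial.X,
        monic_X_pow_sub_C _ (by norm_num), by simp [hθ]⟩
  refine ⟨part1, part2, ?_⟩
  -- PART 3
  have Mspan : (Subalgebra.toSubmodule (Algebra.adjoin (Polynomial Fq) ({θ} : Set K)) :
      Submodule (Polynomial Fq) K) = Submodule.span (Polynomial Fq) {1, θ} :=
    adjoin_sq_eq_span θ Polynomial.X hθ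
  have hcθsq : (algebraMap (Polynomial Fq) K c * θ) ^ 2 =
      algebraMap (Polynomial Fq) K (Polynomial.X * c ^ 2) := by
    rw [mul_pow, hθ]
    simp only [map_mul, map_pow]
    ring
  have Nspan : (Subalgebra.toSubmodule (Algebra.adjoin (Polynomial Fq) ({ρ} : Set K)) :
      Submodule (Polynomial Fq) K) =
      Submodule.span (Polynomial Fq) {1, algebraMap (Polynomial Fq) K c * θ} := by
    rw [part1]
    exact adjoin_sq_eq_span _ _ hcθsq
  -- the θ-coordinate map
  let π : K →ₗ[Polynomial Fq] RatFunc Fq :=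
    LinearMap.restrictScalars (Polynomial Fq) (b.coord 1)
  have hπ1 : π (1 : K) = 0 := by
    have h1 : (1 : K) = b 0 := by rw [hb]; simp
    show b.coord 1 (1 : K) = 0
    rw [h1, Module.Basis.coord_apply, Module.Basis.repr_self]
    simp
  have hπθ : π θ = 1 := by
    have h1 : θ = b 1 := by rw [hb]; simp
    show b.coord 1 θ = 1
    rw [h1, Module.Basis.coord_apply, Module.Basis.repr_self]
    simp
  have key : ∀ u v : Polynomial Fq, π (u • (1 : K) + v • θ) =
      algebraMap (Polynomial Fq) (RatFunc Fq) v := by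
    intro u v
    rw [map_add, LinearMap.map_smul, LinearMap.map_smul, hπ1, hπθ, smul_zero, zero_add,
      Algebra.algebraMap_eq_smul_one]
  -- abbreviations
  let M : Submodule (Polynomial Fq) K :=
    (Subalgebra.toSubmodule (Algebra.adjoin (Polynomial Fq) ({θ} : Set K)))
  let N : Submodule (Polynomial Fq) K :=
    (Subalgebra.toSubmodule (Algebra.adjoin (Polynomial Fq) ({ρ} : Set K)))
  let g0 : M →ₗ[Polynomial Fq] RatFunc Fq := π.comp M.subtype
  have hmemrepr : ∀ x : M, ∃ u v : Polynomial Fq, u • (1 : K) + v • θ = (x : K) := by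
    intro x
    have hx : (x : K) ∈ Submodule.span (Polynomial Fq) {1, θ} := Mspan ▸ x.2
    exact Submodule.mem_span_pair.mp hx
  have hmem : ∀ x : M, g0 x ∈ LinearMap.range (Algebra.linearMap (Polynomial Fq) (RatFunc Fq)) := by
    intro x
    obtain ⟨u, v, huv⟩ := hmemrepr x
    refine ⟨v, ?_⟩
    show algebraMap (Polynomial Fq) (RatFunc Fq) v = π (x : K)
    rw [← huv, key]
  let e := LinearEquiv.ofInjective (Algebra.linearMap (Polynomial Fq) (RatFunc Fq)) hAF
  let f : M →ₗ[Polynomial Fq] (Polynomial Fq ⧸ Ideal.span {c}) :=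
    (Ideal.span {c} : Submodule (Polynomial Fq) (Polynomial Fq)).mkQ ∘ₗ
      (e.symm : _ →ₗ[Polynomial Fq] Polynomial Fq) ∘ₗ
      LinearMap.codRestrict _ g0 hmem
  have fval : ∀ (x : M) (u v : Polynomial Fq), (x : K) = u • (1 : K) + v • θ →
      f x = Submodule.Quotient.mk v := by
    intro x u v hx
    have hg0 : g0 x = algebraMap (Polynomial Fq) (RatFunc Fq) v := by
      show π (x : K) = _
      rw [hx, key]
    have hcod : (LinearMap.codRestrict _ g0 hmem) x =
        e v := by
      apply Subtype.ext
      show g0 x = algebraMap (Polynomial Fq) (RatFunc Fq) v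
      exact hg0
    show Submodule.mkQ _ (e.symm ((LinearMap.codRestrict _ g0 hmem) x)) = _
    rw [hcod, LinearEquiv.symm_apply_apply]
    rfl
  have hsurj : Function.Surjective f := by
    intro z
    obtain ⟨v, rfl⟩ := Submodule.Quotient.mk_surjective _ z
    have hmemM : (v • θ : K) ∈ M := by
      show _ ∈ (Subalgebra.toSubmodule (Algebra.adjoin (Polynomial Fq) ({θ} : Set K)))
      rw [Mspan]
      exact Submodule.mem_span_pair.mpr ⟨0, v, by simp⟩
    exact ⟨⟨v • θ, hmemM⟩, fval _ 0 v (by simp)⟩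
  have hker : LinearMap.ker f = N.comap M.subtype := by
    ext x
    obtain ⟨u, v, huv⟩ := hmemrepr x
    constructor
    · intro hfx
      have h0 : f x = 0 := hfx
      rw [fval x u v huv.symm] at h0
      have hv : v ∈ Ideal.span ({c} : Set (Polynomial Fq)) :=
        (Submodule.Quotient.mk_eq_zero _).mp h0
      obtain ⟨w, hw⟩ := Ideal.mem_span_singleton.mp hv
      show (x : K) ∈ (Subalgebra.toSubmodule (Algebra.adjoin (Polynomial Fq) ({ρ} : Set K)))
      rw [Nspan]
      refine Submodule.mem_span_pair.mpr ⟨u, w, ?_⟩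
      rw [← huv, hw]
      simp only [Algebra.smul_def, map_mul]
      ring
    · intro hxn
      have hxn' : (x : K) ∈ Submodule.span (Polynomial Fq)
          {1, algebraMap (Polynomial Fq) K c * θ} := Nspan ▸ hxn
      obtain ⟨u', w, hw⟩ := Submodule.mem_span_pair.mp hxn'
      have hx2 : (x : K) = u' • (1 : K) + (w * c) • θ := by
        rw [← hw]
        simp only [Algebra.smul_def, map_mul]
        ring
      show f x = 0
      rw [fval x u' (w * c) hx2]
      rw [Submodule.Quotient.mk_eq_zero]
      exact Ideal.mem_span_singleton.mpr (dvd_mul_left c w)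
  refine ⟨?_⟩
  exact (Submodule.quotEquivOfEq _ _ hker.symm).trans (f.quotKerEquivOfSurjective hsurj)
end

section
/- Let A = F_q[T] with q even, F = F_q(T), and consider the Artin–Schreier quadratic extension K of F defined by X² + X = n/m with n, m ∈ A coprime and m = q₁^{2e₁−1}⋯q_s^{2e_s−1} for distinct primes q_i and e_i ≥ 1. Let D = q₁^{e₁}⋯q_s^{e_s}, let ε ∈ F_q^×, and let α be a root of f(X) = X² + εD·X + ε²q₁⋯q_s·n. Then K = F(α) and the integral closure of A in K is A[α]. -/
open Polynomial

lemma keyval {Fq : Type*} [Field Fq] (q u v c n m : Polynomial Fq) (e : ℕ) (he : 1 ≤ e)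
    (hqp : Prime q) (hqu : ¬ q ∣ u) (hqn : ¬ q ∣ n)
    (hEm : emultiplicity q m = ((2 * e - 1 : ℕ) : ℕ∞))
    (hqv : q ∣ v) (hv : v ≠ 0) (hc : c ≠ 0)
    (hdvd : v ^ 2 * m ∣ u ^ 2 * m + u * v * c * m + c ^ 2 * n * v ^ 2) : False := by
  have hfv : FiniteMultiplicity q v := FiniteMultiplicity.of_prime_left hqp hv
  have hfc : FiniteMultiplicity q c := FiniteMultiplicity.of_prime_left hqp hc
  set k := multiplicity q v with hkdef
  set j := multiplicity q c with hjdef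
  have hk1 : 1 ≤ k := multiplicity_pos_of_dvd hqv
  have Ev : emultiplicity q v = (k : ℕ∞) := hfv.emultiplicity_eq_multiplicity
  have Ec : emultiplicity q c = (j : ℕ∞) := hfc.emultiplicity_eq_multiplicity
  have Eu : emultiplicity q u = 0 := emultiplicity_eq_zero.2 hqu
  have En : emultiplicity q n = 0 := emultiplicity_eq_zero.2 hqn
  have E1 : emultiplicity q (u ^ 2 * m) = ((2 * e - 1 : ℕ) : ℕ∞) := by
    rw [emultiplicity_mul hqp, emultiplicity_pow hqp, Eu, hEm]; simp
  have E2 : emultiplicity q (u * v * c * m) = ((k + j + (2 * e - 1) : ℕ) : ℕ∞) := by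
    rw [emultiplicity_mul hqp, emultiplicity_mul hqp, emultiplicity_mul hqp, Eu, Ev, Ec, hEm]
    push_cast; ring
  have E3 : emultiplicity q (c ^ 2 * n * v ^ 2) = ((2 * j + 2 * k : ℕ) : ℕ∞) := by
    rw [emultiplicity_mul hqp, emultiplicity_mul hqp, emultiplicity_pow hqp,
      emultiplicity_pow hqp, Ec, En, Ev]
    push_cast; ring
  have hpowdvd : q ^ (2 * k + (2 * e - 1)) ∣ v ^ 2 * m := by
    rw [pow_add]
    exact mul_dvd_mul (by rw [pow_mul']; exact pow_dvd_pow_of_dvd (pow_multiplicity_dvd q v) 2)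
      (pow_dvd_of_le_emultiplicity (le_of_eq hEm.symm))
  have hle : ((2 * k + (2 * e - 1) : ℕ) : ℕ∞) ≤
      emultiplicity q (u ^ 2 * m + u * v * c * m + c ^ 2 * n * v ^ 2) :=
    le_emultiplicity_of_pow_dvd (hpowdvd.trans hdvd)
  rcases lt_or_ge (2 * j + 2 * k) (2 * e - 1) with h | h
  · have h1 : emultiplicity q (c ^ 2 * n * v ^ 2) < emultiplicity q (u ^ 2 * m + u * v * c * m) := by
      rw [E3]
      refine lt_of_lt_of_le ?_ min_le_emultiplicity_add
      rw [E1, E2]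
      refine lt_min ?_ ?_ <;> exact_mod_cast (by omega)
    rw [emultiplicity_add_of_gt h1, E3] at hle
    have : 2 * k + (2 * e - 1) ≤ 2 * j + 2 * k := by exact_mod_cast hle
    omega
  · have hne : 2 * j + 2 * k ≠ 2 * e - 1 := by omega
    have h1 : emultiplicity q (u ^ 2 * m) < emultiplicity q (u * v * c * m + c ^ 2 * n * v ^ 2) := by
      rw [E1]
      refine lt_of_lt_of_le ?_ min_le_emultiplicity_add
      rw [E2, E3]
      refine lt_min ?_ ?_ <;> exact_mod_cast (by omega)
    have hS : u ^ 2 * m + u * v * c * m + c ^ 2 * n * v ^ 2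
        = u * v * c * m + c ^ 2 * n * v ^ 2 + u ^ 2 * m := by ring
    rw [hS, emultiplicity_add_of_gt h1, E1] at hle
    have : 2 * k + (2 * e - 1) ≤ 2 * e - 1 := by exact_mod_cast hle
    omega

/-- Let `A = F_q[T]` with `q` even, and let `K` be the Artin–Schreier
quadratic extension of `F = F_q(T)` defined by `X² + X = n/m`, with `n, m` coprime and
`m = q₁^{2e₁−1}⋯q_s^{2e_s−1}` for distinct primes `qᵢ`, `eᵢ ≥ 1`.  Set
`D = q₁^{e₁}⋯q_s^{e_s}`, let `ε ∈ F_q^×`, and let `α ∈ K` be a root of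
`f(X) = X² + εD·X + ε²q₁⋯q_s·n`.  Then `K = F(α)` and the integral closure of `A`
in `K` is `A[α]`. -/
theorem stmt14 (Fq : Type*) [Field Fq] [Fintype Fq] [CharP Fq 2]
    (n m : Polynomial Fq) (hnm : IsCoprime n m)
    (s' : ℕ) (qq : Fin s' → Polynomial Fq) (e : Fin s' → ℕ)
    (hq : ∀ i, Irreducible (qq i))
    (hqdist : ∀ i j, i ≠ j → IsCoprime (qq i) (qq j))
    (he : ∀ i, 1 ≤ e i)
    (hm : m = ∏ i, qq i ^ (2 * e i - 1))
    (ε : Fq) (hε : ε ≠ 0)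
    (K : Type*) [Field K] [Algebra (RatFunc Fq) K] [Algebra (Polynomial Fq) K]
    [IsScalarTower (Polynomial Fq) (RatFunc Fq) K]
    (hdim : Module.finrank (RatFunc Fq) K = 2)
    (x : K)
    (hx : x ^ 2 + x = algebraMap (RatFunc Fq) K
      (algebraMap (Polynomial Fq) (RatFunc Fq) n / algebraMap (Polynomial Fq) (RatFunc Fq) m))
    (hxgen : Algebra.adjoin (RatFunc Fq) ({x} : Set K) = ⊤)
    (α : K)
    (hα : α ^ 2 +
        algebraMap (Polynomial Fq) K (Polynomial.C ε * ∏ i, qq i ^ e i) * α +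
        algebraMap (Polynomial Fq) K (Polynomial.C (ε ^ 2) * (∏ i, qq i) * n) = 0) :
    Algebra.adjoin (RatFunc Fq) ({α} : Set K) = ⊤ ∧
    integralClosure (Polynomial Fq) K = Algebra.adjoin (Polynomial Fq) ({α} : Set K) := by
  classical
  obtain ⟨Dp, hDpdef⟩ : ∃ Dp, Dp = ∏ i, qq i ^ e i := ⟨_, rfl⟩
  obtain ⟨Qp, hQpdef⟩ : ∃ Qp, Qp = ∏ i, qq i := ⟨_, rfl⟩
  obtain ⟨d, hddef⟩ : ∃ d, d = C ε * Dp := ⟨_, rfl⟩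
  obtain ⟨nn, hnndef⟩ : ∃ nn, nn = C (ε ^ 2) * Qp * n := ⟨_, rfl⟩
  obtain ⟨aF, haFdef⟩ : ∃ f, f = algebraMap (Polynomial Fq) (RatFunc Fq) := ⟨_, rfl⟩
  obtain ⟨fK, hfKdef⟩ : ∃ f, f = algebraMap (RatFunc Fq) K := ⟨_, rfl⟩
  obtain ⟨aK, haKdef⟩ : ∃ f, f = algebraMap (Polynomial Fq) K := ⟨_, rfl⟩
  rw [← haFdef, ← hfKdef] at hx
  rw [← haKdef, ← hDpdef, ← hQpdef, ← hddef] at hα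
  rw [show C (ε ^ 2) * Qp * n = nn from hnndef.symm] at hα
  -- basic nonvanishing
  have hprime : ∀ i, Prime (qq i) :=
    fun i => (UniqueFactorizationMonoid.irreducible_iff_prime).1 (hq i)
  have hq0 : ∀ i, qq i ≠ 0 := fun i => (hq i).ne_zero
  have hDp0 : Dp ≠ 0 := by
    rw [hDpdef]; exact Finset.prod_ne_zero_iff.2 fun i _ => pow_ne_zero _ (hq0 i)
  have hQp0 : Qp ≠ 0 := by
    rw [hQpdef]; exact Finset.prod_ne_zero_iff.2 fun i _ => hq0 i
  have hm0 : m ≠ 0 := by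
    rw [hm]; exact Finset.prod_ne_zero_iff.2 fun i _ => pow_ne_zero _ (hq0 i)
  have hCε : (C ε : Polynomial Fq) ≠ 0 := by simpa using hε
  have hd0 : d ≠ 0 := by rw [hddef]; exact mul_ne_zero hCε hDp0
  have haFinj : Function.Injective aF := by
    rw [haFdef]; exact IsFractionRing.injective (Polynomial Fq) (RatFunc Fq)
  have hfKinj : Function.Injective fK := by rw [hfKdef]; exact (algebraMap (RatFunc Fq) K).injective
  have htower : ∀ p : Polynomial Fq, aK p = fK (aF p) := by
    rw [haFdef, hfKdef, haKdef]; exact fun p => IsScalarTower.algebraMap_apply _ _ _ p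
  have haF0 : ∀ p : Polynomial Fq, p ≠ 0 → aF p ≠ 0 := fun p hp h => hp (haFinj (by simpa using h))
  have haFd0 : aF d ≠ 0 := haF0 d hd0
  have haFm0 : aF m ≠ 0 := haF0 m hm0
  have hfKd0 : fK (aF d) ≠ 0 := fun h => haFd0 (hfKinj (by simpa using h))
  -- characteristic two
  haveI hCK : CharP K 2 := charP_of_injective_ringHom
    (f := (algebraMap (Polynomial Fq) K).comp (C : Fq →+* Polynomial Fq))
    ((algebraMap (Polynomial Fq) K).comp (C : Fq →+* Polynomial Fq)).injective 2
  have h2 : (2 : K) = 0 := by exact_mod_cast CharP.cast_eq_zero K 2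
  -- the key polynomial identity D² = Q·m
  have hDsq : Dp ^ 2 = Qp * m := by
    rw [hDpdef, ← Finset.prod_pow, hm, hQpdef, ← Finset.prod_mul_distrib]
    refine Finset.prod_congr rfl fun i _ => ?_
    rw [← pow_mul, mul_comm (e i) 2, ← pow_succ']
    congr 1
    have := he i; omega
  -- α² = d·α + nn
  have hα2 : α ^ 2 = aK d * α + aK nn := by
    linear_combination hα - (aK d * α + aK nn) * h2
  have hα2' : α ^ 2 = fK (aF d) * α + fK (aF nn) := by rw [← htower, ← htower]; exact hα2
  ----------------------------------------------------------------
  -- Part 1 : adjoin F {α} = ⊤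
  ----------------------------------------------------------------
  obtain ⟨y, hydef⟩ : ∃ y : K, y = fK (aF d) * x := ⟨_, rfl⟩
  have hFid : aF d ^ 2 * (aF n / aF m) = aF nn := by
    rw [mul_comm, div_mul_eq_mul_div, div_eq_iff haFm0, ← map_pow, ← map_mul, ← map_mul]
    refine congrArg aF ?_
    rw [hddef, hnndef, mul_pow, hDsq, map_pow]
    ring
  have hy : y ^ 2 + aK d * y + aK nn = 0 := by
    have e1 : y ^ 2 + aK d * y + aK nn = fK (aF d ^ 2) * (x ^ 2 + x) + aK nn := by
      rw [hydef, htower d, map_pow]; ring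
    rw [e1, hx, ← map_mul, hFid, htower]
    exact CharTwo.add_self_eq_zero _
  have hfac : (α + y) * (α + y + aK d) = 0 := by
    linear_combination hα + hy + (α * y - aK nn) * h2
  have hymem : y ∈ Algebra.adjoin (RatFunc Fq) ({α} : Set K) := by
    rcases mul_eq_zero.mp hfac with h | h
    · have : y = α := by linear_combination h - α * h2
      rw [this]; exact Algebra.subset_adjoin rfl
    · have : y = α + aK d := by linear_combination h - (α + aK d) * h2
      rw [this, htower, hfKdef]
      exact Subalgebra.add_mem _ (Algebra.subset_adjoin rfl) (Subalgebra.algebraMap_mem _ _)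
  have hxmem : x ∈ Algebra.adjoin (RatFunc Fq) ({α} : Set K) := by
    have hxy : x = fK ((aF d)⁻¹) * y := by
      rw [hydef, map_inv₀, ← mul_assoc, inv_mul_cancel₀ hfKd0, one_mul]
    rw [hxy, hfKdef]
    exact Subalgebra.mul_mem _ (Subalgebra.algebraMap_mem _ _) hymem
  have hgen : Algebra.adjoin (RatFunc Fq) ({α} : Set K) = ⊤ := by
    rw [eq_top_iff, ← hxgen]
    exact Algebra.adjoin_le (Set.singleton_subset_iff.2 hxmem)
  refine ⟨hgen, ?_⟩
  ----------------------------------------------------------------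
  -- Part 2 : integral closure
  ----------------------------------------------------------------
  -- α is not in the image of F
  have hαnr : α ∉ Set.range fK := by
    rintro ⟨t, ht⟩
    have hle : Algebra.adjoin (RatFunc Fq) ({α} : Set K) ≤ ⊥ := by
      refine Algebra.adjoin_le ?_
      intro w hw
      rw [Set.mem_singleton_iff] at hw
      subst hw
      rw [SetLike.mem_coe, Algebra.mem_bot]
      exact ⟨t, by rw [← hfKdef]; exact ht⟩
    rw [hgen] at hle
    have hbt : (⊥ : Subalgebra (RatFunc Fq) K) = ⊤ := (le_bot_iff.mp hle).symm
    have := Subalgebra.bot_eq_top_iff_finrank_eq_one.mp hbt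
    rw [hdim] at this; omega
  -- α is integral over A
  have hαint : IsIntegral (Polynomial Fq) α := by
    refine ⟨X ^ 2 + (C d * X + C nn), ?_, ?_⟩
    · apply monic_X_pow_add
      have : (C d * X + C nn).degree ≤ 1 := by compute_degree
      exact lt_of_le_of_lt this (by norm_num)
    · simp only [eval₂_add, eval₂_mul, eval₂_X_pow, eval₂_X, eval₂_C]
      rw [← haKdef]
      linear_combination hα
  have hsub : Algebra.adjoin (Polynomial Fq) ({α} : Set K) ≤ integralClosure (Polynomial Fq) K :=
    Algebra.adjoin_le (Set.singleton_subset_iff.2 hαint)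
  -- span decomposition
  have hspan : ∀ w : K, ∃ p q : RatFunc Fq, w = fK p + fK q * α := by
    intro w
    have hw : w ∈ Algebra.adjoin (RatFunc Fq) ({α} : Set K) := by rw [hgen]; trivial
    induction hw using Algebra.adjoin_induction with
    | mem y hy =>
        rw [Set.mem_singleton_iff] at hy
        subst hy
        exact ⟨0, 1, by simp⟩
    | algebraMap r => exact ⟨r, 0, by simp [hfKdef]⟩
    | add _ _ _ _ h1 h2 =>
        obtain ⟨p1, q1, rfl⟩ := h1; obtain ⟨p2, q2, rfl⟩ := h2
        exact ⟨p1 + p2, q1 + q2, by simp only [map_add]; ring⟩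
    | mul _ _ _ _ h1 h2 =>
        obtain ⟨p1, q1, rfl⟩ := h1; obtain ⟨p2, q2, rfl⟩ := h2
        refine ⟨p1 * p2 + q1 * q2 * aF nn, p1 * q2 + q1 * p2 + q1 * q2 * aF d, ?_⟩
        simp only [map_add, map_mul]
        linear_combination (fK q1 * fK q2) * hα2'
  have hincl : integralClosure (Polynomial Fq) K ≤ Algebra.adjoin (Polynomial Fq) ({α} : Set K) := by
    intro z hz
    have hzint : IsIntegral (Polynomial Fq) z := hz
    obtain ⟨aa, bb, hzab⟩ := hspan z
    have hzq : z ^ 2 + fK bb * fK (aF d) * z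
        + (fK aa ^ 2 + fK aa * fK bb * fK (aF d) + fK bb ^ 2 * fK (aF nn)) = 0 := by
      rw [hzab]
      linear_combination (fK bb) ^ 2 * hα2' + (fK aa ^ 2 + fK aa * fK bb * fK (aF d)
        + fK aa * fK bb * α + fK bb ^ 2 * fK (aF d) * α + fK bb ^ 2 * fK (aF nn)) * h2
    by_cases hbb : bb = 0
    · -- z lies in F
      have hzaa : z = fK aa := by rw [hzab, hbb]; simp
      have haaint : IsIntegral (Polynomial Fq) aa := by
        refine (isIntegral_algebraMap_iff (B := K) ?_).mp ?_
        · rw [← hfKdef]; exact hfKinj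
        · rw [← hfKdef, ← hzaa]; exact hzint
      obtain ⟨a₀, ha₀⟩ := IsIntegrallyClosed.isIntegral_iff.mp haaint
      have hz0 : z = aK a₀ := by rw [hzaa, htower, haFdef, ha₀]
      rw [hz0, haKdef]
      exact Subalgebra.algebraMap_mem _ _
    · -- the generic case
      have hfbb : fK bb ≠ 0 := fun h => hbb (hfKinj (by simpa using h))
      have hznr : z ∉ Set.range fK := by
        rintro ⟨t, ht⟩
        apply hαnr
        refine ⟨(t - aa) / bb, ?_⟩
        rw [map_div₀, map_sub, ht, hzab, add_sub_cancel_left, mul_div_cancel_left₀ _ hfbb]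
      have hzintF : IsIntegral (RatFunc Fq) z := hzint.tower_top
      obtain ⟨P, hPdef⟩ : ∃ P : (RatFunc Fq)[X], P = X ^ 2 +
          (C (bb * aF d) * X + C (aa ^ 2 + aa * bb * aF d + bb ^ 2 * aF nn)) := ⟨_, rfl⟩
      have hPmonic : P.Monic := by
        rw [hPdef]
        apply monic_X_pow_add
        have h1 : (C (bb * aF d) * X + C (aa ^ 2 + aa * bb * aF d + bb ^ 2 * aF nn)).degree ≤ 1 := by
          compute_degree
        refine lt_of_le_of_lt h1 (by norm_num)
      have hProot : Polynomial.aeval z P = 0 := by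
        rw [hPdef]
        simp only [map_add, map_mul, map_pow, aeval_X_pow, aeval_X, aeval_C]
        rw [← hfKdef]
        linear_combination hzq
      have hdvdP : minpoly (RatFunc Fq) z ∣ P := minpoly.dvd _ _ hProot
      have hPdeg : P.natDegree = 2 := by rw [hPdef]; compute_degree!
      have hminDeg : 2 ≤ (minpoly (RatFunc Fq) z).natDegree := by
        by_contra hlt
        push_neg at hlt
        have hpos : 0 < (minpoly (RatFunc Fq) z).natDegree := minpoly.natDegree_pos hzintF
        have h1 : (minpoly (RatFunc Fq) z).natDegree = 1 := by omega
        have hdeg1 : (minpoly (RatFunc Fq) z).degree = 1 := by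
          rw [degree_eq_natDegree (minpoly.ne_zero hzintF), h1]; rfl
        obtain ⟨t, ht⟩ := minpoly.degree_eq_one_iff.mp hdeg1
        exact hznr ⟨t, by rw [hfKdef]; exact ht⟩
      have hminP : minpoly (RatFunc Fq) z = P :=
        (eq_of_monic_of_dvd_of_natDegree_le (minpoly.monic hzintF) hPmonic hdvdP
          (by rw [hPdeg]; exact hminDeg)).symm
      have hmap : P = (minpoly (Polynomial Fq) z).map (algebraMap (Polynomial Fq) (RatFunc Fq)) := by
        rw [← hminP]
        exact minpoly.isIntegrallyClosed_eq_field_fractions' (RatFunc Fq) hzint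
      obtain ⟨c, hcdef⟩ : ∃ c, c = (minpoly (Polynomial Fq) z).coeff 1 := ⟨_, rfl⟩
      obtain ⟨w, hwdef⟩ : ∃ w, w = (minpoly (Polynomial Fq) z).coeff 0 := ⟨_, rfl⟩
      have hbbd : bb * aF d = aF c := by
        have h1 := congrArg (fun r => r.coeff 1) hmap
        simp only [hPdef, coeff_map, coeff_add, coeff_X_pow, coeff_C_mul, coeff_X_one, coeff_C] at h1
        rw [← haFdef] at h1
        rw [hcdef]
        simpa using h1
      have hNF : aF w = aa ^ 2 + aa * bb * aF d + bb ^ 2 * aF nn := by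
        have h1 := congrArg (fun r => r.coeff 0) hmap
        simp only [hPdef, coeff_map, coeff_add, coeff_X_pow, coeff_C_mul, coeff_X_zero, coeff_C] at h1
        rw [← haFdef] at h1
        rw [hwdef]
        simpa using h1.symm
      have hcne : c ≠ 0 := by
        intro h
        rw [h, map_zero] at hbbd
        exact (mul_ne_zero hbb haFd0) hbbd
      obtain ⟨u, hudef⟩ : ∃ u, u = aa.num := ⟨_, rfl⟩
      obtain ⟨v, hvdef⟩ : ∃ v, v = aa.denom := ⟨_, rfl⟩
      have hv0 : v ≠ 0 := by rw [hvdef]; exact aa.denom_ne_zero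
      have huv : IsCoprime u v := by rw [hudef, hvdef]; exact aa.isCoprime_num_denom
      have haa : aF u / aF v = aa := by rw [hudef, hvdef, haFdef]; exact RatFunc.num_div_denom aa
      have haau : aF u = aa * aF v := by
        rw [← haa, div_mul_cancel₀ _ (haF0 v hv0)]
      have hEF : aF (u ^ 2 * d ^ 2 + u * v * c * d ^ 2 + c ^ 2 * nn * v ^ 2)
          = aF (w * (v ^ 2 * d ^ 2)) := by
        simp only [map_add, map_mul, map_pow]
        rw [haau, ← hbbd]
        linear_combination (-(aF v) ^ 2 * (aF d) ^ 2) * hNF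
      have hEA := haFinj hEF
      rw [show d ^ 2 = C (ε ^ 2) * Qp * m from by rw [hddef, mul_pow, hDsq, map_pow]; ring,
        hnndef] at hEA
      have hE : u ^ 2 * m + u * v * c * m + c ^ 2 * n * v ^ 2 = w * (v ^ 2 * m) := by
        have h3 : C (ε ^ 2) * Qp * (u ^ 2 * m + u * v * c * m + c ^ 2 * n * v ^ 2)
            = C (ε ^ 2) * Qp * (w * (v ^ 2 * m)) := by linear_combination hEA
        have hCε2 : (C (ε ^ 2) : Polynomial Fq) ≠ 0 := by simpa using pow_ne_zero 2 hε
        exact mul_left_cancel₀ (mul_ne_zero hCε2 hQp0) h3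
      have hdvdS : v ^ 2 * m ∣ u ^ 2 * m + u * v * c * m + c ^ 2 * n * v ^ 2 :=
        ⟨w, by rw [hE]; ring⟩
      have hvu : IsUnit v := by
        by_contra hvnu
        obtain ⟨p, hpirr, hpv⟩ := WfDvdMonoid.exists_irreducible_factor hvnu hv0
        have hpp : Prime p := (UniqueFactorizationMonoid.irreducible_iff_prime).1 hpirr
        have hpu : ¬ p ∣ u := fun h => hpirr.not_isUnit (huv.isUnit_of_dvd' h hpv)
        have hvdvd : v ∣ u ^ 2 * m :=
          ⟨v * m * w - u * c * m - c ^ 2 * n * v, by linear_combination hE⟩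
        rcases hpp.dvd_mul.mp (hpv.trans hvdvd) with h | h
        · exact hpu (hpp.dvd_of_dvd_pow h)
        · rw [hm] at h
          obtain ⟨i, -, hpi⟩ := hpp.exists_mem_finset_dvd h
          have hpqq : p ∣ qq i := hpp.dvd_of_dvd_pow hpi
          have hassoc : Associated p (qq i) := hpirr.associated_of_dvd (hq i) hpqq
          have hqiv : qq i ∣ v := hassoc.symm.dvd.trans hpv
          have hqiu : ¬ qq i ∣ u := fun hdvd => (hq i).not_isUnit (huv.isUnit_of_dvd' hdvd hqiv)
          have hqim : qq i ∣ m := by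
            rw [hm]
            exact dvd_trans (dvd_pow_self _ (by have := he i; omega))
              (Finset.dvd_prod_of_mem _ (Finset.mem_univ i))
          have hqin : ¬ qq i ∣ n := fun hdvd => (hq i).not_isUnit (hnm.isUnit_of_dvd' hdvd hqim)
          have hEm : emultiplicity (qq i) m = ((2 * e i - 1 : ℕ) : ℕ∞) := by
            rw [hm, Finset.emultiplicity_prod (hprime i), Finset.sum_eq_single i]
            · exact emultiplicity_pow_self_of_prime (hprime i) _
            · intro j _ hji
              rw [emultiplicity_pow (hprime i), emultiplicity_eq_zero.2
                (fun hdvd => (hq i).not_isUnit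
                  ((hqdist i j (Ne.symm hji)).isUnit_of_dvd' dvd_rfl hdvd)), mul_zero]
            · intro habs; exact absurd (Finset.mem_univ i) habs
          exact keyval (qq i) u v c n m (e i) (he i) (hprime i) hqiu hqin hEm hqiv hv0 hcne hdvdS
      obtain ⟨vu, hvueq⟩ := hvu
      have haa0 : aF (u * ↑vu⁻¹) = aa := by
        rw [← haa, eq_div_iff (haF0 _ hv0), ← map_mul]
        congr 1
        rw [mul_assoc, ← hvueq, Units.inv_mul, mul_one]
      have hmc2 : m ∣ c ^ 2 := by
        have h1 : m ∣ c ^ 2 * n * v ^ 2 :=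
          ⟨w * v ^ 2 - u ^ 2 - u * v * c, by linear_combination hE⟩
        have h2 : m ∣ c ^ 2 * n := by
          have hassoc : Associated (c ^ 2 * n) (c ^ 2 * n * v ^ 2) :=
            associated_mul_unit_right _ _ ((IsUnit.pow 2 ⟨vu, hvueq⟩))
          exact h1.trans hassoc.symm.dvd
        exact (hnm.symm).dvd_of_dvd_mul_right h2
      have hDc : Dp ∣ c := by
        rw [hDpdef]
        refine Finset.prod_dvd_of_coprime ?_ ?_
        · intro i _ j hj hij
          exact (hqdist i j hij).pow
        · intro i _
          have hfin : FiniteMultiplicity (qq i) c := FiniteMultiplicity.of_prime_left (hprime i) hcne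
          have hle : ((2 * e i - 1 : ℕ) : ℕ∞) ≤ emultiplicity (qq i) (c ^ 2) :=
            le_emultiplicity_of_pow_dvd (dvd_trans
              (by rw [hm]; exact Finset.dvd_prod_of_mem _ (Finset.mem_univ i)) hmc2)
          rw [emultiplicity_pow (hprime i), hfin.emultiplicity_eq_multiplicity] at hle
          have hle' : 2 * e i - 1 ≤ 2 * multiplicity (qq i) c := by exact_mod_cast hle
          have hej : e i ≤ multiplicity (qq i) c := by have := he i; omega
          exact (pow_dvd_pow _ hej).trans (pow_multiplicity_dvd _ _)
      obtain ⟨c', hc'⟩ := hDc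
      have hbb0 : aF (C ε⁻¹ * c') = bb := by
        have hstep : aF (C ε⁻¹ * c') * aF d = aF c := by
          rw [← map_mul]
          congr 1
          rw [hc', hddef, show C ε⁻¹ * c' * (C ε * Dp) = (C ε⁻¹ * C ε) * (Dp * c')
            from by ring, ← C_mul, inv_mul_cancel₀ hε, C_1, one_mul]
        exact mul_right_cancel₀ haFd0 (hstep.trans hbbd.symm)
      rw [hzab, ← haa0, ← hbb0, ← htower, ← htower, haKdef]
      exact Subalgebra.add_mem _ (Subalgebra.algebraMap_mem _ _)
        (Subalgebra.mul_mem _ (Subalgebra.algebraMap_mem _ _) (Algebra.subset_adjoin rfl))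
  exact le_antisymm hincl hsub
end
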